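/- Let R be a ring, M an R-module, and e ∈ M. Then the module Sym^{≤2}(M)/(1−e)Sym^{≤1}(M) is isomorphic to Sym²(M), where Sym^{≤k}(M) = R ⊕ M ⊕ ... ⊕ Sym^k(M) is the truncation of the symmetric algebra and (1−e) acts by multiplication in Sym(M). More precisely, (1−e)Sym^{≤1}(M) ∩ Sym²(M) = 0 and every element of Sym^{≤2}(M) is congruent modulo (1−e)Sym^{≤1}(M) to an element of Sym²(M). -/

import Mathlib

open TensorProduct

variable (R M : Type*) [CommRing R] [AddCommGroup M] [Module R M]

/-- The commutativity relation on the tensor algebra. -/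
inductive SymAlgRel : TensorAlgebra R M → TensorAlgebra R M → Prop
  | comm (m n : M) : SymAlgRel (TensorAlgebra.ι R m * TensorAlgebra.ι R n)
      (TensorAlgebra.ι R n * TensorAlgebra.ι R m)

/-- The symmetric algebra `Sym(M)`, as the quotient of the tensor algebra by the
commutativity relations. -/
abbrev SymmAlg := RingQuot (SymAlgRel R M)

/-- The canonical inclusion `M → Sym(M)`. -/
noncomputable def symι : M →ₗ[R] SymmAlg R M :=
  (RingQuot.mkAlgHom R (SymAlgRel R M)).toLinearMap ∘ₗ TensorAlgebra.ι R

/-- The submodule of `Sym(M)` spanned by the image of `M` (the degree-one part). -/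
noncomputable def symV : Submodule R (SymmAlg R M) :=
  Submodule.span R (Set.range (symι R M))


-- auxiliary instances for TrivSqZeroExt
noncomputable instance auxOp : Module Rᵐᵒᵖ M :=
  Module.compHom M ((RingHom.id R).fromOpposite mul_comm)

instance : IsCentralScalar R M := ⟨fun _ _ => rfl⟩

instance : SMulCommClass R Rᵐᵒᵖ M :=
  ⟨fun r s m => by
    show r • (MulOpposite.unop s) • m = (MulOpposite.unop s) • r • m
    rw [smul_smul, smul_smul, mul_comm]⟩

noncomputable def Phi : SymmAlg R M →ₐ[R] TrivSqZeroExt R M :=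
  RingQuot.liftAlgHom R ⟨TensorAlgebra.lift R (TrivSqZeroExt.inrHom R M), by
    intro a b h
    cases h with
    | comm m n =>
      simp [TensorAlgebra.lift_ι_apply, TrivSqZeroExt.inr_mul_inr]⟩

lemma Phi_symι (m : M) : Phi R M (symι R M m) = TrivSqZeroExt.inr m := by
  simp [Phi, symι, RingQuot.liftAlgHom_mkAlgHom_apply, TensorAlgebra.lift_ι_apply]

lemma symV_eq : symV R M = LinearMap.range (symι R M) := by
  rw [symV, ← LinearMap.coe_range, Submodule.span_eq]

lemma Phi_V2 : ∀ x ∈ symV R M ^ 2, Phi R M x = 0 := by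
  have h : symV R M ^ 2 ≤ LinearMap.ker (Phi R M).toLinearMap := by
    rw [sq]
    refine Submodule.mul_le.2 fun v hv w hw => ?_
    rw [symV_eq] at hv hw
    obtain ⟨m, rfl⟩ := hv
    obtain ⟨n, rfl⟩ := hw
    simp [LinearMap.mem_ker, Phi_symι, TrivSqZeroExt.inr_mul_inr]
  exact fun x hx => h hx

lemma pow_two_eq :
    ((1 ⊔ symV R M : Submodule R (SymmAlg R M)) ^ 2) = 1 ⊔ symV R M ⊔ symV R M ^ 2 := by
  rw [sq, Submodule.mul_sup, Submodule.sup_mul, Submodule.sup_mul, one_mul, one_mul, mul_one,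
    ← sq, ← sup_assoc, sup_assoc (1 : Submodule R (SymmAlg R M)) (symV R M) (symV R M), sup_idem]

noncomputable def theta : SymmAlg R M →ₗ[R] SymmAlg R M :=
  LinearMap.id
    - (Algebra.linearMap R (SymmAlg R M)) ∘ₗ (TrivSqZeroExt.fstHom R R M).toLinearMap
        ∘ₗ (Phi R M).toLinearMap
    - (symι R M) ∘ₗ (TrivSqZeroExt.sndHom R M) ∘ₗ (Phi R M).toLinearMap

lemma theta_apply (x : SymmAlg R M) :
    theta R M x = x - algebraMap R _ (Phi R M x).fst - symι R M (Phi R M x).snd := rfl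

lemma theta_mem : ∀ x ∈ ((1 ⊔ symV R M : Submodule R (SymmAlg R M)) ^ 2),
    theta R M x ∈ symV R M ^ 2 := by
  have h : ((1 ⊔ symV R M : Submodule R (SymmAlg R M)) ^ 2) ≤
      Submodule.comap (theta R M) (symV R M ^ 2) := by
    rw [pow_two_eq]
    refine sup_le (sup_le ?_ ?_) ?_
    · intro x hx
      rw [Submodule.mem_one] at hx
      obtain ⟨r, rfl⟩ := hx
      simp [Submodule.mem_comap, theta_apply, TrivSqZeroExt.algebraMap_eq_inl]
    · intro x hx
      rw [symV_eq] at hx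
      obtain ⟨m, rfl⟩ := hx
      simp [Submodule.mem_comap, theta_apply, Phi_symι]
    · intro x hx
      simpa [Submodule.mem_comap, theta_apply, Phi_V2 R M x hx] using hx
  exact fun x hx => h hx

lemma mem_symV (m : M) : symι R M m ∈ symV R M := by
  rw [symV_eq]; exact ⟨m, rfl⟩


lemma part1 (e : M) :
    (Submodule.map (LinearMap.mulLeft R ((1 : SymmAlg R M) - symι R M e))
        ((1 ⊔ symV R M : Submodule R (SymmAlg R M)))) ⊓ (symV R M ^ 2) = ⊥ := by
  rw [eq_bot_iff]
  intro x hx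
  rw [Submodule.mem_inf] at hx
  obtain ⟨hxW, hxV2⟩ := hx
  rw [Submodule.mem_map] at hxW
  obtain ⟨y, hy, rfl⟩ := hxW
  rw [Submodule.mem_sup] at hy
  obtain ⟨c, hc, d, hd, rfl⟩ := hy
  rw [Submodule.mem_one] at hc
  obtain ⟨r, rfl⟩ := hc
  rw [symV_eq] at hd
  obtain ⟨n, rfl⟩ := hd
  have h0 := Phi_V2 R M _ hxV2
  simp only [LinearMap.mulLeft_apply, map_mul, map_sub, map_one, map_add,
    Phi_symι, AlgHom.commutes] at h0
  have hr : r = 0 := by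
    have := congrArg TrivSqZeroExt.fst h0
    simpa [TrivSqZeroExt.algebraMap_eq_inl] using this
  have hn : n = 0 := by
    have := congrArg TrivSqZeroExt.snd h0
    simpa [hr] using this
  simp [hr, hn]

lemma part2 (e : M) : ∀ x ∈ ((1 ⊔ symV R M : Submodule R (SymmAlg R M)) ^ 2),
    ∃ y ∈ symV R M ^ 2,
      x - y ∈ Submodule.map (LinearMap.mulLeft R ((1 : SymmAlg R M) - symι R M e))
        ((1 ⊔ symV R M : Submodule R (SymmAlg R M))) := by
  intro x hx
  refine ⟨theta R M x + symι R M e * symι R M ((Phi R M x).snd + (Phi R M x).fst • e),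
    Submodule.add_mem _ (theta_mem R M x hx) ?_, ?_⟩
  · rw [sq]
    exact Submodule.mul_mem_mul (mem_symV R M e) (mem_symV R M _)
  · rw [Submodule.mem_map]
    refine ⟨algebraMap R _ (Phi R M x).fst +
      symι R M ((Phi R M x).snd + (Phi R M x).fst • e), ?_, ?_⟩
    · exact Submodule.add_mem _
        (Submodule.mem_sup_left (Submodule.mem_one.2 ⟨_, rfl⟩))
        (Submodule.mem_sup_right (mem_symV R M _))
    · have hEa : symι R M e * algebraMap R (SymmAlg R M) (Phi R M x).fst
          = (Phi R M x).fst • symι R M e := by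
        rw [← Algebra.commutes, ← Algebra.smul_def]
      rw [LinearMap.mulLeft_apply, theta_apply]
      simp only [map_add, map_smul, sub_mul, one_mul, mul_add, hEa, mul_smul_comm,
        smul_add, smul_neg, smul_sub]
      abel


lemma quotAux {R S : Type*} [CommRing R] [AddCommGroup S] [Module R S]
    (P Q W : Submodule R S) (hle : Q ≤ P)
    (h1 : W ⊓ Q = ⊥) (h2 : ∀ x ∈ P, ∃ y ∈ Q, x - y ∈ W) :
    Nonempty ((↥P ⧸ Submodule.comap P.subtype W) ≃ₗ[R] ↥Q) := by
  set W' := Submodule.comap P.subtype W with hW'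
  set g : Q →ₗ[R] ↥P ⧸ W' := W'.mkQ ∘ₗ Submodule.inclusion hle with hg
  have hbij : Function.Bijective g := by
    constructor
    · intro v w hvw
      rw [hg, LinearMap.comp_apply, LinearMap.comp_apply, Submodule.mkQ_apply,
        Submodule.mkQ_apply, Submodule.Quotient.eq] at hvw
      have h3 : (v : S) - w ∈ W := by
        simpa [hW', Submodule.mem_comap] using hvw
      have h4 : (v : S) - w ∈ W ⊓ Q :=
        Submodule.mem_inf.mpr ⟨h3, Submodule.sub_mem _ v.2 w.2⟩
      rw [h1, Submodule.mem_bot, sub_eq_zero] at h4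
      exact Subtype.ext h4
    · intro q
      obtain ⟨⟨x, hx⟩, rfl⟩ := Submodule.Quotient.mk_surjective W' q
      obtain ⟨y, hyQ, hxy⟩ := h2 x hx
      refine ⟨⟨y, hyQ⟩, ?_⟩
      rw [hg, LinearMap.comp_apply, Submodule.mkQ_apply, Submodule.Quotient.eq]
      show Submodule.inclusion hle ⟨y, hyQ⟩ - (⟨x, hx⟩ : _) ∈ W'
      have h3 : y - x ∈ W := by
        have := W.neg_mem hxy
        simpa using this
      simpa [hW', Submodule.mem_comap] using h3
  exact ⟨(LinearEquiv.ofBijective g hbij).symm⟩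

/-- for `e ∈ M`, `Sym^{≤2}(M)/(1-e)Sym^{≤1}(M) ≅ Sym²(M)`.  Here
`Sym^{≤n}(M) = (1 ⊔ V)^n` (with `V` the degree-one part), `Sym²(M) = V^2`, and
`(1-e)Sym^{≤1}(M)` is the image of `Sym^{≤1}(M)` under multiplication by `1 - e`.
More precisely, `(1-e)Sym^{≤1}(M) ∩ Sym²(M) = 0`, and every element of `Sym^{≤2}(M)`
is congruent modulo `(1-e)Sym^{≤1}(M)` to an element of `Sym²(M)`. -/
theorem stmt5 (e : M) :
    (Submodule.map (LinearMap.mulLeft R ((1 : SymmAlg R M) - symι R M e))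
        ((1 ⊔ symV R M : Submodule R (SymmAlg R M)))) ⊓ (symV R M ^ 2) = ⊥ ∧
    (∀ x ∈ ((1 ⊔ symV R M : Submodule R (SymmAlg R M)) ^ 2), ∃ y ∈ symV R M ^ 2,
      x - y ∈ Submodule.map (LinearMap.mulLeft R ((1 : SymmAlg R M) - symι R M e))
        ((1 ⊔ symV R M : Submodule R (SymmAlg R M)))) ∧
    Nonempty
      ((@HasQuotient.Quotient _ _
          (@Submodule.hasQuotient R ↥((1 ⊔ symV R M : Submodule R (SymmAlg R M)) ^ 2) _ _ _)
          (Submodule.comap ((1 ⊔ symV R M : Submodule R (SymmAlg R M)) ^ 2).subtype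
            (Submodule.map (LinearMap.mulLeft R ((1 : SymmAlg R M) - symι R M e))
              (1 ⊔ symV R M : Submodule R (SymmAlg R M))))) ≃ₗ[R]
        ↥(symV R M ^ 2)) := by
  refine ⟨part1 R M e, part2 R M e, ?_⟩
  have hle : symV R M ^ 2 ≤ (1 ⊔ symV R M : Submodule R (SymmAlg R M)) ^ 2 := by
    rw [pow_two_eq]; exact le_sup_right
  exact quotAux _ _ _ hle (part1 R M e) (part2 R M e)
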